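/- Let V, M be finite-dimensional real vector spaces, s : V × V → ℝ symmetric positive semidefinite with seminorm |||·|||, b : M × V → ℝ bilinear, and |||·|||_1 a norm on M satisfying the inf-sup condition: for each v ∈ M there exists ρ_v ∈ V with b(v,ρ_v) = |||v|||_1² and |||ρ_v||| ≤ β |||v|||_1. Suppose e ∈ M and ε ∈ V satisfy b(e,σ) = ℓ(σ) − s(ε,σ) for all σ ∈ V, where |ℓ(σ)| ≤ C|||σ||| for all σ. Then |||e|||_1 ≤ β(C + |||ε|||). -/
import Mathlib

lemma cs_aux {V : Type*} [AddCommGroup V] [Module ℝ V]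
    (s : V →ₗ[ℝ] V →ₗ[ℝ] ℝ)
    (hsym : ∀ x y : V, s x y = s y x)
    (hpsd : ∀ x : V, 0 ≤ s x x) (x y : V) :
    |s x y| ≤ Real.sqrt (s x x) * Real.sqrt (s y y) := by
  have key : ∀ t : ℝ, 0 ≤ (s y y) * (t * t) + (2 * s x y) * t + s x x := by
    intro t
    have h := hpsd (x + t • y)
    simp only [map_add, map_smul, LinearMap.add_apply, LinearMap.smul_apply, smul_eq_mul] at h
    rw [hsym y x] at h
    nlinarith [h]
  have hd := discrim_le_zero key
  have : (s x y) ^ 2 ≤ s x x * s y y := by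
    unfold discrim at hd; nlinarith
  calc |s x y| = Real.sqrt ((s x y) ^ 2) := by rw [Real.sqrt_sq_eq_abs]
    _ ≤ Real.sqrt (s x x * s y y) := Real.sqrt_le_sqrt this
    _ = Real.sqrt (s x x) * Real.sqrt (s y y) := Real.sqrt_mul (hpsd x) _

/-- Derivation of the primal error estimate from the error equation (Theorem 6.1):
under the inf-sup condition, b(e,σ) = ℓ(σ) − s(ε,σ) with |ℓ(σ)| ≤ C|||σ||| implies
|||e|||₁ ≤ β (C + |||ε|||). -/
theorem stmt_3
    {V M : Type*} [AddCommGroup V] [Module ℝ V] [FiniteDimensional ℝ V]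
    [AddCommGroup M] [Module ℝ M] [FiniteDimensional ℝ M]
    (s : V →ₗ[ℝ] V →ₗ[ℝ] ℝ)
    (hsym : ∀ x y : V, s x y = s y x)
    (hpsd : ∀ x : V, 0 ≤ s x x)
    (b : M →ₗ[ℝ] V →ₗ[ℝ] ℝ)
    (n1 : M → ℝ)
    -- n1 is a norm on M
    (hn1_nonneg : ∀ v, 0 ≤ n1 v)
    (hn1_def : ∀ v, n1 v = 0 → v = 0)
    (hn1_smul : ∀ (a : ℝ) (v : M), n1 (a • v) = |a| * n1 v)
    (hn1_tri : ∀ v w : M, n1 (v + w) ≤ n1 v + n1 w)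
    (β : ℝ) (hβ : 0 < β)
    (hinfsup : ∀ v : M, ∃ ρ : V, b v ρ = (n1 v) ^ 2 ∧ Real.sqrt (s ρ ρ) ≤ β * n1 v)
    (ℓ : V →ₗ[ℝ] ℝ) (C : ℝ) (hC : 0 ≤ C)
    (hbound : ∀ σ : V, |ℓ σ| ≤ C * Real.sqrt (s σ σ))
    (e : M) (ε : V)
    (herr : ∀ σ : V, b e σ = ℓ σ - s ε σ) :
    n1 e ≤ β * (C + Real.sqrt (s ε ε)) := by
  obtain ⟨ρ, hbρ, hρ⟩ := hinfsup e
  have hρ0 : 0 ≤ Real.sqrt (s ρ ρ) := Real.sqrt_nonneg _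
  have hε0 : 0 ≤ Real.sqrt (s ε ε) := Real.sqrt_nonneg _
  have h1 : (n1 e) ^ 2 ≤ (C + Real.sqrt (s ε ε)) * Real.sqrt (s ρ ρ) := by
    have h2 := herr ρ
    have h3 := hbound ρ
    have h4 := cs_aux s hsym hpsd ε ρ
    have : (n1 e) ^ 2 = ℓ ρ - s ε ρ := by rw [← hbρ, h2]
    rw [this]
    have := abs_le.mp h3
    have := abs_le.mp h4
    nlinarith
  rcases eq_or_lt_of_le (hn1_nonneg e) with h0 | h0
  · rw [← h0]; positivity
  · have h5 : (n1 e) ^ 2 ≤ (C + Real.sqrt (s ε ε)) * (β * n1 e) := by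
      calc (n1 e) ^ 2 ≤ (C + Real.sqrt (s ε ε)) * Real.sqrt (s ρ ρ) := h1
        _ ≤ (C + Real.sqrt (s ε ε)) * (β * n1 e) := by
            apply mul_le_mul_of_nonneg_left hρ; positivity
    nlinarith
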